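/- In the algebra Z_n, setting Q_i = ∑_{k=1}^i z_k w_k, the following hold for 1 ≤ i, k ≤ n: Q_i Q_k = Q_k Q_i; z_k w_k = Q_k − Q_{k-1}; w_k z_k = Q_k − q² Q_{k-1}; z_k Q_i = q^{-2} Q_i z_k and w_k Q_i = q² Q_i w_k if k > i; z_k Q_i = Q_i z_k and w_k Q_i = Q_i w_k if k ≤ i. -/

import Mathlib

noncomputable section

/-- Free algebra on generators `z_1,…,z_n, w_1,…,w_n`. -/
abbrev FreeZW (n : ℕ) := FreeAlgebra ℂ (Fin n ⊕ Fin n)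

/-- Generator `z_i`. -/
def zGen (n : ℕ) (i : Fin n) : FreeZW n := FreeAlgebra.ι ℂ (Sum.inl i)

/-- Generator `w_i`. -/
def wGen (n : ℕ) (i : Fin n) : FreeZW n := FreeAlgebra.ι ℂ (Sum.inr i)

/-- The defining relations of the quantized algebra of polynomials on `ℂ^n`:
`z_i z_j = q z_j z_i` (i<j), `w_j w_i = q w_i w_j` (i<j), `w_i z_j = q z_j w_i` (i≠j),
`w_i z_i = z_i w_i + (1-q²) ∑_{k<i} z_k w_k`. -/
inductive ZRel (n : ℕ) (q : ℝ) : FreeZW n → FreeZW n → Prop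
  | zz {i j : Fin n} (h : i < j) :
      ZRel n q (zGen n i * zGen n j) ((q : ℂ) • (zGen n j * zGen n i))
  | ww {i j : Fin n} (h : i < j) :
      ZRel n q (wGen n j * wGen n i) ((q : ℂ) • (wGen n i * wGen n j))
  | wz {i j : Fin n} (h : i ≠ j) :
      ZRel n q (wGen n i * zGen n j) ((q : ℂ) • (zGen n j * wGen n i))
  | wzDiag (i : Fin n) :
      ZRel n q (wGen n i * zGen n i)
        (zGen n i * wGen n i +
          (1 - (q : ℂ) ^ 2) • ∑ k ∈ Finset.univ.filter (· < i), zGen n k * wGen n k)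

/-- The quantized algebra `Z_n` of polynomials on `ℂ^n`. -/
abbrev ZAlg (n : ℕ) (q : ℝ) := RingQuot (ZRel n q)

/-- The generator `z_i` of `Z_n`. -/
def zEl (n : ℕ) (q : ℝ) (i : Fin n) : ZAlg n q :=
  RingQuot.mkAlgHom ℂ (ZRel n q) (zGen n i)

/-- The generator `w_i` of `Z_n`. -/
def wEl (n : ℕ) (q : ℝ) (i : Fin n) : ZAlg n q :=
  RingQuot.mkAlgHom ℂ (ZRel n q) (wGen n i)

/-- The monomial `z^λ w^μ = z_1^{λ_1} ⋯ z_n^{λ_n} w_n^{μ_n} ⋯ w_1^{μ_1}` in `Z_n`. -/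
def zwMono (n : ℕ) (q : ℝ) (lam mu : Fin n → ℕ) : ZAlg n q :=
  (List.ofFn fun i : Fin n => zEl n q i ^ lam i).prod *
    (List.ofFn fun i : Fin n => wEl n q i.rev ^ mu i.rev).prod

/-- The central element `Q_i = ∑_{k=1}^{i} z_k w_k` (here `i : ℕ`, summing over the first
`i` indices; `Q_0 = 0`). -/
def QEl (n : ℕ) (q : ℝ) (i : ℕ) : ZAlg n q :=
  ∑ k ∈ Finset.univ.filter (fun k : Fin n => (k : ℕ) < i), zEl n q k * wEl n q k

section Aux

variable {n : ℕ} {q : ℝ}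

lemma zz_rel {i j : Fin n} (h : i < j) :
    zEl n q i * zEl n q j = (q : ℂ) • (zEl n q j * zEl n q i) := by
  have := RingQuot.mkAlgHom_rel ℂ (ZRel.zz (n := n) (q := q) h)
  rw [map_mul, map_smul, map_mul] at this
  exact this

lemma ww_rel {i j : Fin n} (h : i < j) :
    wEl n q j * wEl n q i = (q : ℂ) • (wEl n q i * wEl n q j) := by
  have := RingQuot.mkAlgHom_rel ℂ (ZRel.ww (n := n) (q := q) h)
  rw [map_mul, map_smul, map_mul] at this
  exact this

lemma wz_rel {i j : Fin n} (h : i ≠ j) :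
    wEl n q i * zEl n q j = (q : ℂ) • (zEl n q j * wEl n q i) := by
  have := RingQuot.mkAlgHom_rel ℂ (ZRel.wz (n := n) (q := q) h)
  rw [map_mul, map_smul, map_mul] at this
  exact this

lemma wzd_rel (i : Fin n) :
    wEl n q i * zEl n q i
      = zEl n q i * wEl n q i + (1 - (q : ℂ) ^ 2) • QEl n q (i : ℕ) := by
  have := RingQuot.mkAlgHom_rel ℂ (ZRel.wzDiag (n := n) (q := q) i)
  rw [map_mul, map_add, map_mul, map_smul, map_sum] at this
  have hset : (Finset.univ.filter (fun k : Fin n => (k : ℕ) < (i : ℕ)))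
      = Finset.univ.filter (· < i) := by
    ext k
    simp only [Finset.mem_filter, Finset.mem_univ, true_and, Fin.lt_def]
  rw [QEl, hset]
  simp only [map_mul] at this
  exact this

variable (hq : (q : ℂ) ≠ 0)
include hq

lemma zz_rel' {i j : Fin n} (h : i < j) :
    zEl n q j * zEl n q i = ((q : ℂ))⁻¹ • (zEl n q i * zEl n q j) := by
  rw [zz_rel h, smul_smul, inv_mul_cancel₀ hq, one_smul]

lemma ww_rel' {i j : Fin n} (h : i < j) :
    wEl n q i * wEl n q j = ((q : ℂ))⁻¹ • (wEl n q j * wEl n q i) := by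
  rw [ww_rel h, smul_smul, inv_mul_cancel₀ hq, one_smul]

lemma wz_rel' {i j : Fin n} (h : i ≠ j) :
    zEl n q j * wEl n q i = ((q : ℂ))⁻¹ • (wEl n q i * zEl n q j) := by
  rw [wz_rel h, smul_smul, inv_mul_cancel₀ hq, one_smul]

/-- For `k < m`, `z_k` commutes with `z_m w_m`. -/
lemma zS_lt {k m : Fin n} (h : k < m) :
    zEl n q k * (zEl n q m * wEl n q m) = (zEl n q m * wEl n q m) * zEl n q k := calc
  zEl n q k * (zEl n q m * wEl n q m) = (zEl n q k * zEl n q m) * wEl n q m := by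
    rw [mul_assoc]
  _ = ((q : ℂ) • (zEl n q m * zEl n q k)) * wEl n q m := by rw [zz_rel h]
  _ = (q : ℂ) • (zEl n q m * (zEl n q k * wEl n q m)) := by
    rw [smul_mul_assoc, mul_assoc]
  _ = (q : ℂ) • (zEl n q m * (((q : ℂ))⁻¹ • (wEl n q m * zEl n q k))) := by
    rw [wz_rel' hq (ne_of_gt h)]
  _ = ((q : ℂ) * ((q : ℂ))⁻¹) • (zEl n q m * (wEl n q m * zEl n q k)) := by
    rw [mul_smul_comm, smul_smul]
  _ = (zEl n q m * wEl n q m) * zEl n q k := by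
    rw [mul_inv_cancel₀ hq, one_smul, mul_assoc]

/-- For `m < k`, `z_k (z_m w_m) = q⁻² (z_m w_m) z_k`. -/
lemma zS_gt {k m : Fin n} (h : m < k) :
    zEl n q k * (zEl n q m * wEl n q m)
      = (((q : ℂ) ^ 2)⁻¹) • ((zEl n q m * wEl n q m) * zEl n q k) := calc
  zEl n q k * (zEl n q m * wEl n q m) = (zEl n q k * zEl n q m) * wEl n q m := by
    rw [mul_assoc]
  _ = (((q : ℂ))⁻¹ • (zEl n q m * zEl n q k)) * wEl n q m := by rw [zz_rel' hq h]
  _ = ((q : ℂ))⁻¹ • (zEl n q m * (zEl n q k * wEl n q m)) := by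
    rw [smul_mul_assoc, mul_assoc]
  _ = ((q : ℂ))⁻¹ • (zEl n q m * (((q : ℂ))⁻¹ • (wEl n q m * zEl n q k))) := by
    rw [wz_rel' hq (ne_of_lt h)]
  _ = (((q : ℂ))⁻¹ * ((q : ℂ))⁻¹) • (zEl n q m * (wEl n q m * zEl n q k)) := by
    rw [mul_smul_comm, smul_smul]
  _ = (((q : ℂ) ^ 2)⁻¹) • ((zEl n q m * wEl n q m) * zEl n q k) := by
    rw [← mul_inv, ← sq, mul_assoc]

/-- For `k < m`, `w_k` commutes with `z_m w_m`. -/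
lemma wS_lt {k m : Fin n} (h : k < m) :
    wEl n q k * (zEl n q m * wEl n q m) = (zEl n q m * wEl n q m) * wEl n q k := calc
  wEl n q k * (zEl n q m * wEl n q m) = (wEl n q k * zEl n q m) * wEl n q m := by
    rw [mul_assoc]
  _ = ((q : ℂ) • (zEl n q m * wEl n q k)) * wEl n q m := by
    rw [wz_rel (ne_of_lt h)]
  _ = (q : ℂ) • (zEl n q m * (wEl n q k * wEl n q m)) := by
    rw [smul_mul_assoc, mul_assoc]
  _ = (q : ℂ) • (zEl n q m * (((q : ℂ))⁻¹ • (wEl n q m * wEl n q k))) := by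
    rw [ww_rel' hq h]
  _ = ((q : ℂ) * ((q : ℂ))⁻¹) • (zEl n q m * (wEl n q m * wEl n q k)) := by
    rw [mul_smul_comm, smul_smul]
  _ = (zEl n q m * wEl n q m) * wEl n q k := by
    rw [mul_inv_cancel₀ hq, one_smul, mul_assoc]

omit hq

/-- For `m < k`, `w_k (z_m w_m) = q² (z_m w_m) w_k`. -/
lemma wS_gt {k m : Fin n} (h : m < k) :
    wEl n q k * (zEl n q m * wEl n q m)
      = ((q : ℂ) ^ 2) • ((zEl n q m * wEl n q m) * wEl n q k) := calc
  wEl n q k * (zEl n q m * wEl n q m) = (wEl n q k * zEl n q m) * wEl n q m := by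
    rw [mul_assoc]
  _ = ((q : ℂ) • (zEl n q m * wEl n q k)) * wEl n q m := by
    rw [wz_rel (ne_of_gt h)]
  _ = (q : ℂ) • (zEl n q m * (wEl n q k * wEl n q m)) := by
    rw [smul_mul_assoc, mul_assoc]
  _ = (q : ℂ) • (zEl n q m * ((q : ℂ) • (wEl n q m * wEl n q k))) := by
    rw [ww_rel h]
  _ = ((q : ℂ) * (q : ℂ)) • (zEl n q m * (wEl n q m * wEl n q k)) := by
    rw [mul_smul_comm, smul_smul]
  _ = ((q : ℂ) ^ 2) • ((zEl n q m * wEl n q m) * wEl n q k) := by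
    rw [← sq, mul_assoc]

lemma QEl_zero : QEl n q 0 = 0 := by
  simp [QEl]

lemma QEl_succ (i : ℕ) :
    QEl n q (i + 1) = QEl n q i
      + (if h : i < n then zEl n q ⟨i, h⟩ * wEl n q ⟨i, h⟩ else 0) := by
  unfold QEl
  by_cases h : i < n
  · rw [dif_pos h]
    have hs : Finset.univ.filter (fun k : Fin n => (k : ℕ) < i + 1)
        = insert (⟨i, h⟩ : Fin n) (Finset.univ.filter (fun k : Fin n => (k : ℕ) < i)) := by
      ext k
      simp only [Finset.mem_filter, Finset.mem_insert, Finset.mem_univ, true_and, Fin.ext_iff]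
      omega
    rw [hs, Finset.sum_insert (by simp)]
    exact (add_comm _ _)
  · rw [dif_neg h, add_zero]
    have hs : Finset.univ.filter (fun k : Fin n => (k : ℕ) < i + 1)
        = Finset.univ.filter (fun k : Fin n => (k : ℕ) < i) := by
      ext k
      have := k.isLt
      simp only [Finset.mem_filter, Finset.mem_univ, true_and]
      omega
    rw [hs]

include hq

lemma zQ (k : Fin n) (i : ℕ) :
    zEl n q k * QEl n q i
      = (if (k : ℕ) < i then 1 else ((q : ℂ) ^ 2)⁻¹) • (QEl n q i * zEl n q k) := by
  induction i with
  | zero => simp [QEl_zero]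
  | succ i ih =>
    rw [QEl_succ]
    by_cases hn : i < n
    · rw [dif_pos hn]
      rcases lt_trichotomy (k : ℕ) i with hk | hk | hk
      · rw [if_pos hk, one_smul] at ih
        rw [if_pos (show (k : ℕ) < i + 1 by omega), one_smul]
        rw [mul_add, add_mul, ih, zS_lt hq (show k < ⟨i, hn⟩ from hk)]
      · have hm : (⟨i, hn⟩ : Fin n) = k := Fin.ext hk.symm
        rw [hm]
        rw [if_neg (show ¬ (k : ℕ) < i by omega)] at ih
        have e2 : zEl n q k * (zEl n q k * wEl n q k)
            = (zEl n q k * wEl n q k) * zEl n q k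
              - (1 - (q : ℂ) ^ 2) • (zEl n q k * QEl n q i) := by
          have h3 := wzd_rel (n := n) (q := q) k
          rw [hk] at h3
          have h4 : (zEl n q k * wEl n q k) * zEl n q k
              = zEl n q k * (wEl n q k * zEl n q k) := by rw [mul_assoc]
          rw [h4, h3, mul_add, mul_smul_comm]
          abel
        rw [if_pos (show (k : ℕ) < i + 1 by omega), one_smul, mul_add, add_mul, e2, ih]
        have hq2 : ((q : ℂ) ^ 2) ≠ 0 := pow_ne_zero _ hq
        match_scalars <;> field_simp <;> ring
      · rw [if_neg (show ¬ (k : ℕ) < i by omega)] at ih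
        rw [if_neg (show ¬ (k : ℕ) < i + 1 by omega)]
        rw [mul_add, add_mul, smul_add, ih, zS_gt hq (show (⟨i, hn⟩ : Fin n) < k from hk)]
    · rw [dif_neg hn, add_zero]
      have hkn : (k : ℕ) < i := lt_of_lt_of_le k.isLt (le_of_not_gt hn)
      rw [if_pos hkn] at ih
      rw [if_pos (show (k : ℕ) < i + 1 by omega)]
      exact ih

lemma wQ (k : Fin n) (i : ℕ) :
    wEl n q k * QEl n q i
      = (if (k : ℕ) < i then 1 else (q : ℂ) ^ 2) • (QEl n q i * wEl n q k) := by
  induction i with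
  | zero => simp [QEl_zero]
  | succ i ih =>
    rw [QEl_succ]
    by_cases hn : i < n
    · rw [dif_pos hn]
      rcases lt_trichotomy (k : ℕ) i with hk | hk | hk
      · rw [if_pos hk, one_smul] at ih
        rw [if_pos (show (k : ℕ) < i + 1 by omega), one_smul]
        rw [mul_add, add_mul, ih, wS_lt hq (show k < ⟨i, hn⟩ from hk)]
      · have hm : (⟨i, hn⟩ : Fin n) = k := Fin.ext hk.symm
        rw [hm]
        rw [if_neg (show ¬ (k : ℕ) < i by omega)] at ih
        have e2 : wEl n q k * (zEl n q k * wEl n q k)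
            = (zEl n q k * wEl n q k) * wEl n q k
              + (1 - (q : ℂ) ^ 2) • (QEl n q i * wEl n q k) := by
          have h3 := wzd_rel (n := n) (q := q) k
          rw [hk] at h3
          rw [← mul_assoc, h3, add_mul, smul_mul_assoc, mul_assoc]
        rw [if_pos (show (k : ℕ) < i + 1 by omega), one_smul, mul_add, add_mul, e2, ih]
        match_scalars <;> ring
      · rw [if_neg (show ¬ (k : ℕ) < i by omega)] at ih
        rw [if_neg (show ¬ (k : ℕ) < i + 1 by omega)]
        rw [mul_add, add_mul, smul_add, ih, wS_gt (show (⟨i, hn⟩ : Fin n) < k from hk)]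
    · rw [dif_neg hn, add_zero]
      have hkn : (k : ℕ) < i := lt_of_lt_of_le k.isLt (le_of_not_gt hn)
      rw [if_pos hkn] at ih
      rw [if_pos (show (k : ℕ) < i + 1 by omega)]
      exact ih

lemma SQ (m : Fin n) (i : ℕ) :
    (zEl n q m * wEl n q m) * QEl n q i = QEl n q i * (zEl n q m * wEl n q m) := by
  have hz := zQ hq m i
  have hw := wQ hq m i
  by_cases h : (m : ℕ) < i
  · rw [if_pos h, one_smul] at hz hw
    rw [mul_assoc, hw, ← mul_assoc, hz, mul_assoc]
  · rw [if_neg h] at hz hw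
    rw [mul_assoc, hw, mul_smul_comm, ← mul_assoc, hz, smul_mul_assoc, smul_smul]
    have hq2 : ((q : ℂ) ^ 2) ≠ 0 := pow_ne_zero _ hq
    rw [mul_inv_cancel₀ hq2, one_smul, mul_assoc]

end Aux

/-- Basic identities for `Q_i = ∑_{k=1}^i z_k w_k` in `Z_n` (indices for `z, w` are 0-based:
the paper's `z_k` is `zEl n q ⟨k-1,_⟩` and the paper's `Q_i` is `QEl n q i`, `Q_0 = 0`):
the `Q_i` commute; `z_k w_k = Q_k − Q_{k-1}`; `w_k z_k = Q_k − q² Q_{k-1}`;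
`z_k Q_i = q^{-2} Q_i z_k` and `w_k Q_i = q² Q_i w_k` if `k > i`;
`z_k Q_i = Q_i z_k` and `w_k Q_i = Q_i w_k` if `k ≤ i`. -/
theorem QEl_identities (n : ℕ) (q : ℝ) (h0 : 0 < q) (h1 : q < 1) :
    (∀ i j : ℕ, QEl n q i * QEl n q j = QEl n q j * QEl n q i) ∧
    (∀ k : Fin n, zEl n q k * wEl n q k = QEl n q ((k : ℕ) + 1) - QEl n q (k : ℕ)) ∧
    (∀ k : Fin n, wEl n q k * zEl n q k =
        QEl n q ((k : ℕ) + 1) - (q : ℂ) ^ 2 • QEl n q (k : ℕ)) ∧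
    (∀ (i : ℕ) (k : Fin n), i ≤ (k : ℕ) →
        zEl n q k * QEl n q i = (((q : ℂ) ^ 2)⁻¹) • (QEl n q i * zEl n q k) ∧
        wEl n q k * QEl n q i = (q : ℂ) ^ 2 • (QEl n q i * wEl n q k)) ∧
    (∀ (i : ℕ) (k : Fin n), (k : ℕ) < i →
        zEl n q k * QEl n q i = QEl n q i * zEl n q k ∧
        wEl n q k * QEl n q i = QEl n q i * wEl n q k) := by
  have hq : (q : ℂ) ≠ 0 := by
    exact_mod_cast h0.ne'
  refine ⟨?_, ?_, ?_, ?_, ?_⟩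
  · intro i j
    rw [QEl, Finset.sum_mul, Finset.mul_sum]
    exact Finset.sum_congr rfl fun m _ => SQ hq m j
  · intro k
    have h2 := QEl_succ (n := n) (q := q) (k : ℕ)
    rw [dif_pos k.isLt] at h2
    simp only [Fin.eta] at h2
    rw [h2]; abel
  · intro k
    have h1 := wzd_rel (n := n) (q := q) k
    have h2 := QEl_succ (n := n) (q := q) (k : ℕ)
    rw [dif_pos k.isLt] at h2
    simp only [Fin.eta] at h2
    rw [h1, h2]
    match_scalars <;> ring
  · intro i k hik
    have hz := zQ hq k i
    have hw := wQ hq k i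
    rw [if_neg (by omega)] at hz hw
    exact ⟨hz, hw⟩
  · intro i k hik
    have hz := zQ hq k i
    have hw := wQ hq k i
    rw [if_pos hik, one_smul] at hz hw
    exact ⟨hz, hw⟩


end
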